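/- arXiv:2006.09144 — 6 statements merged into one kernel-verified Lean document; each statement's English description precedes it below -/
import Mathlib

section
/- Let Q be a symmetric positive definite n×n matrix, A a diagonal positive definite n×n matrix, and P = Q + A. If λ_min(A⁻¹Q) ≥ (1-√ε)/√ε for some ε ∈ (0,1], then for every nonzero vector r ∈ ℝ^n, ( -½ rᵀQ⁻¹r - (½ rᵀP⁻¹QP⁻¹r - rᵀP⁻¹r) ) / ( -½ rᵀQ⁻¹r ) ≤ ε. Equivalently, with f(x) = ½xᵀQx + rᵀx, x̂ = -Q⁻¹r, and x̂_A = -P⁻¹r, we have |f(x̂) - f(x̂_A)| / |f(x̂)| ≤ ε. -/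
open Matrix BigOperators Finset

noncomputable def specNorm {𝕜 : Type*} [RCLike 𝕜] {m n : Type*} [Fintype m] [Fintype n]
    [DecidableEq m] [DecidableEq n] (A : Matrix m n 𝕜) : ℝ :=
  ‖LinearMap.toContinuousLinearMap (Matrix.toEuclideanLin A)‖

noncomputable def minEig {n : Type*} [Fintype n] [DecidableEq n] (A : Matrix n n ℝ) : ℝ :=
  sInf {μ : ℝ | (A - μ • 1).det = 0}

noncomputable def maxEig {n : Type*} [Fintype n] [DecidableEq n] (A : Matrix n n ℝ) : ℝ :=
  sSup {μ : ℝ | (A - μ • 1).det = 0}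

def blk {N : ℕ} {d : Fin N → ℕ}
    (B : Matrix ((i : Fin N) × Fin (d i)) ((i : Fin N) × Fin (d i)) ℝ) (i j : Fin N) :
    Matrix (Fin (d i)) (Fin (d j)) ℝ := fun a b => B ⟨i, a⟩ ⟨j, b⟩

noncomputable def eNorm {k : ℕ} (v : Fin k → ℝ) : ℝ := Real.sqrt (∑ a, v a ^ 2)

noncomputable def blockVecNorm {N : ℕ} {d : Fin N → ℕ}
    (x : ((i : Fin N) × Fin (d i)) → ℝ) : ℝ :=
  ⨆ i, eNorm (fun a => x ⟨i, a⟩)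

noncomputable def blockOpNorm {N : ℕ} {d : Fin N → ℕ}
    (B : Matrix ((i : Fin N) × Fin (d i)) ((i : Fin N) × Fin (d i)) ℝ) : ℝ :=
  sInf {c | 0 ≤ c ∧ ∀ x, blockVecNorm (B.mulVec x) ≤ c * blockVecNorm x}


lemma psd_of_det_roots {n : ℕ} {M : Matrix (Fin n) (Fin n) ℝ} (hM : M.IsHermitian)
    (h : ∀ μ : ℝ, (M - μ • 1).det = 0 → 0 ≤ μ) : M.PosSemidef := by
  apply hM.posSemidef_iff_eigenvalues_nonneg.mpr
  intro i
  apply h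
  rw [← Matrix.exists_mulVec_eq_zero_iff]
  have hv : M *ᵥ ⇑(hM.eigenvectorBasis i) = hM.eigenvalues i • ⇑(hM.eigenvectorBasis i) :=
    hM.mulVec_eigenvectorBasis i
  refine ⟨⇑(hM.eigenvectorBasis i), ?_, ?_⟩
  · exact fun hc => hM.eigenvectorBasis.orthonormal.ne_zero i (by ext j; exact congrFun hc j)
  · rw [Matrix.sub_mulVec, hv, Matrix.smul_mulVec, Matrix.one_mulVec, sub_self]

lemma dot_sym {n : ℕ} {M : Matrix (Fin n) (Fin n) ℝ} (hM : Mᵀ = M) (x y : Fin n → ℝ) :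
    (M *ᵥ x) ⬝ᵥ y = x ⬝ᵥ (M *ᵥ y) := by
  rw [Matrix.dotProduct_mulVec, ← Matrix.mulVec_transpose, hM]

lemma loewner_lower {n : ℕ} {Q A : Matrix (Fin n) (Fin n) ℝ} (hQ : Q.PosDef) (hA : A.PosDef)
    (hAdiag : A.IsDiag) {c : ℝ}
    (heig : ∀ μ : ℝ, (A⁻¹ * Q - μ • 1).det = 0 → c ≤ μ) :
    (Q - c • A).PosSemidef := by
  classical
  have hd : ∀ i, 0 < A i i := by
    have hA' : Matrix.PosDef (Matrix.diagonal A.diag) := hAdiag.diagonal_diag.symm ▸ hA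
    exact Matrix.posDef_diagonal_iff.mp hA'
  set g : Fin n → ℝ := fun i => Real.sqrt (A i i) with hgdef
  have hg : ∀ i, 0 < g i := fun i => Real.sqrt_pos.mpr (hd i)
  set S : Matrix (Fin n) (Fin n) ℝ := Matrix.diagonal g with hSdef
  set T : Matrix (Fin n) (Fin n) ℝ := Matrix.diagonal (fun i => (g i)⁻¹) with hTdef
  have hST : S * T = 1 := by
    rw [hSdef, hTdef, Matrix.diagonal_mul_diagonal, ← Matrix.diagonal_one]
    exact congrArg Matrix.diagonal (funext fun i => mul_inv_cancel₀ (hg i).ne')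
  have hTS : T * S = 1 := by
    rw [hSdef, hTdef, Matrix.diagonal_mul_diagonal, ← Matrix.diagonal_one]
    exact congrArg Matrix.diagonal (funext fun i => inv_mul_cancel₀ (hg i).ne')
  have hSS : S * S = A := by
    rw [hSdef, Matrix.diagonal_mul_diagonal, ← hAdiag.diagonal_diag]
    exact congrArg Matrix.diagonal (funext fun i => Real.mul_self_sqrt (hd i).le)
  have hSH : Sᴴ = S := by
    rw [hSdef, Matrix.diagonal_conjTranspose]; simp
  have hTH : Tᴴ = T := by
    rw [hTdef, Matrix.diagonal_conjTranspose]; simp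
  set B : Matrix (Fin n) (Fin n) ℝ := T * Q * T with hBdef
  have hBH : B.IsHermitian := by
    show Bᴴ = B
    rw [hBdef, Matrix.conjTranspose_mul, Matrix.conjTranspose_mul, hTH, hQ.isHermitian.eq,
      Matrix.mul_assoc]
  have hdetT : T.det ≠ 0 := by
    intro h0
    have := Matrix.det_mul T S
    rw [hTS, Matrix.det_one, h0, zero_mul] at this
    exact one_ne_zero this
  have hTAT : T * A * T = 1 := by
    rw [← hSS, ← Matrix.mul_assoc, Matrix.mul_assoc (T*S), hST, Matrix.mul_one, hTS]
  have hBc : (B - c • 1).PosSemidef := by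
    have h1 : ((c • 1 : Matrix (Fin n) (Fin n) ℝ))ᴴ = c • 1 := by simp
    apply psd_of_det_roots (hBH.sub h1)
    intro μ hμ
    have hshift : B - c • 1 - μ • 1 = B - (c + μ) • (1 : Matrix (Fin n) (Fin n) ℝ) := by
      rw [add_smul, sub_sub]
    rw [hshift] at hμ
    set ν := c + μ with hν
    have hfact : B - ν • 1 = T * (Q - ν • A) * T := by
      rw [Matrix.mul_sub, Matrix.sub_mul, hBdef, Matrix.mul_smul, Matrix.smul_mul, hTAT]
    rw [hfact, Matrix.det_mul, Matrix.det_mul] at hμ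
    have hdetQA : (Q - ν • A).det = 0 := by
      rcases mul_eq_zero.mp hμ with h | h
      · rcases mul_eq_zero.mp h with h' | h'
        · exact absurd h' hdetT
        · exact h'
      · exact absurd h hdetT
    have hAfact : A⁻¹ * Q - ν • 1 = A⁻¹ * (Q - ν • A) := by
      rw [Matrix.mul_sub, Matrix.mul_smul, Matrix.nonsing_inv_mul A
        ((Matrix.isUnit_iff_isUnit_det _).mp hA.isUnit)]
    have : (A⁻¹ * Q - ν • 1).det = 0 := by
      rw [hAfact, Matrix.det_mul, hdetQA, mul_zero]
    have := heig ν this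
    linarith
  have hSBS : S * B * S = Q := by
    rw [hBdef, ← Matrix.mul_assoc, ← Matrix.mul_assoc, hST, one_mul, Matrix.mul_assoc, hTS,
      Matrix.mul_one]
  have hfinal : S * (B - c • 1) * S = Q - c • A := by
    rw [Matrix.mul_sub, Matrix.mul_smul, Matrix.mul_one, Matrix.sub_mul, Matrix.smul_mul, hSS,
      hSBS]
  have hres := hBc.mul_mul_conjTranspose_same S
  rw [hSH, hfinal] at hres
  exact hres

theorem relative_error_bound {n : ℕ} (Q A P : Matrix (Fin n) (Fin n) ℝ)
    (hQ : Q.PosDef) (hA : A.PosDef) (hAdiag : A.IsDiag) (hP : P = Q + A)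
    (ε : ℝ) (hε0 : 0 < ε) (hε1 : ε ≤ 1)
    (heig : ∀ μ : ℝ, (A⁻¹ * Q - μ • 1).det = 0 → (1 - Real.sqrt ε) / Real.sqrt ε ≤ μ)
    (r : Fin n → ℝ) (hr : r ≠ 0) :
    (-(1/2) * (r ⬝ᵥ Q⁻¹.mulVec r)
        - ((1/2) * (r ⬝ᵥ (P⁻¹ * Q * P⁻¹).mulVec r) - r ⬝ᵥ P⁻¹.mulVec r))
      / (-(1/2) * (r ⬝ᵥ Q⁻¹.mulVec r)) ≤ ε := by
  classical
  set s := Real.sqrt ε with hsdef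
  have hs0 : 0 < s := Real.sqrt_pos.mpr hε0
  have hss : s * s = ε := Real.mul_self_sqrt hε0.le
  set c := (1 - s) / s with hcdef
  have hcs : c * s = 1 - s := div_mul_cancel₀ _ hs0.ne'
  have hs1 : s ≤ 1 := by nlinarith
  have hc0 : 0 ≤ c := div_nonneg (by linarith) hs0.le
  have hQcA : (Q - c • A).PosSemidef := loewner_lower hQ hA hAdiag heig
  clear_value c s
  have key : ∀ z : Fin n → ℝ, c * (z ⬝ᵥ A *ᵥ z) ≤ z ⬝ᵥ Q *ᵥ z := by
    intro z
    have h0 := hQcA.dotProduct_mulVec_nonneg z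
    simp only [star_trivial, Matrix.sub_mulVec, Matrix.smul_mulVec, dotProduct_sub,
      dotProduct_smul, smul_eq_mul] at h0
    linarith
  have hPd : P.PosDef := hP ▸ hQ.add hA
  have hQdet : IsUnit Q.det := (Matrix.isUnit_iff_isUnit_det _).mp hQ.isUnit
  have hPdet : IsUnit P.det := (Matrix.isUnit_iff_isUnit_det _).mp hPd.isUnit
  have hQ1 : Q * Q⁻¹ = 1 := Matrix.mul_nonsing_inv _ hQdet
  have hQ1' : Q⁻¹ * Q = 1 := Matrix.nonsing_inv_mul _ hQdet
  have hP1 : P * P⁻¹ = 1 := Matrix.mul_nonsing_inv _ hPdet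
  have hQsym : Qᵀ = Q := Matrix.conjTranspose_eq_transpose_of_trivial Q ▸ hQ.isHermitian.eq
  have hAsym : Aᵀ = A := Matrix.conjTranspose_eq_transpose_of_trivial A ▸ hA.isHermitian.eq
  have hPsym : Pᵀ = P := Matrix.conjTranspose_eq_transpose_of_trivial P ▸ hPd.isHermitian.eq
  have hPisym : (P⁻¹)ᵀ = P⁻¹ := by rw [Matrix.transpose_nonsing_inv, hPsym]
  set t := P⁻¹ *ᵥ r with htdef
  set u := A *ᵥ t with hudef
  set y := Q⁻¹ *ᵥ u with hydef
  set QQ := t ⬝ᵥ Q *ᵥ t with hQQdef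
  set QA := t ⬝ᵥ A *ᵥ t with hQAdef
  set R := u ⬝ᵥ Q⁻¹ *ᵥ u with hRdef
  clear_value R QA QQ y u t
  have hrt : P *ᵥ t = r := by
    rw [htdef, Matrix.mulVec_mulVec, hP1, Matrix.one_mulVec]
  have hQy : Q *ᵥ y = u := by
    rw [hydef, Matrix.mulVec_mulVec, hQ1, Matrix.one_mulVec]
  have hQQ0 : 0 < QQ := by
    have ht0 : t ≠ 0 := by
      intro h0
      apply hr
      rw [← hrt, h0, Matrix.mulVec_zero]
    rw [hQQdef]
    have := hQ.dotProduct_mulVec_pos ht0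
    simpa using this
  have hQA0 : 0 ≤ QA := by
    rw [hQAdef]
    have := hA.posSemidef.dotProduct_mulVec_nonneg t
    simpa using this
  have hR0 : 0 ≤ R := by
    rw [hRdef]
    have := (hQ.inv).posSemidef.dotProduct_mulVec_nonneg u
    simpa using this
  have hyA : y ⬝ᵥ A *ᵥ t = u ⬝ᵥ y := by
    rw [dotProduct_comm y (A *ᵥ t), ← hudef]
  have hyQ : y ⬝ᵥ Q *ᵥ y = u ⬝ᵥ y := by rw [hQy]; exact dotProduct_comm y u
  have hRuy : R = u ⬝ᵥ y := by rw [hRdef, hydef]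
  have h1 : t ⬝ᵥ A *ᵥ y = u ⬝ᵥ y := by rw [← dot_sym hAsym t y, ← hudef]
  have hi : c * R ≤ QA := by
    have hcs2 : 0 ≤ (c • y - t) ⬝ᵥ A *ᵥ (c • y - t) := by
      have := hA.posSemidef.dotProduct_mulVec_nonneg (c • y - t); simpa using this
    have hexp : (c • y - t) ⬝ᵥ A *ᵥ (c • y - t)
        = c * c * (y ⬝ᵥ A *ᵥ y) - 2 * c * (u ⬝ᵥ y) + QA := by
      simp only [Matrix.mulVec_sub, Matrix.mulVec_smul, sub_dotProduct,
        dotProduct_sub, smul_dotProduct, dotProduct_smul, smul_eq_mul,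
        h1, hyA, hQAdef]
      ring
    have hkey := key y
    nlinarith [hkey, hyQ, hRuy]
  have hii : c * QA ≤ QQ := hQQdef ▸ hQAdef ▸ key t
  have hident : ε * c * c + 2 * (ε * c) = 1 - ε := by
    linear_combination (s * c + s + 1) * hcs - (c + 1) ^ 2 * hss
  have hmain : R ≤ ε * (QQ + 2 * QA + R) := by
    have k1 : ε * c * (c * R) ≤ ε * c * QA :=
      mul_le_mul_of_nonneg_left hi (mul_nonneg hε0.le hc0)
    have k2 : 2 * ε * (c * R) ≤ 2 * ε * QA :=
      mul_le_mul_of_nonneg_left hi (by positivity)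
    have k3 : ε * (c * QA) ≤ ε * QQ := mul_le_mul_of_nonneg_left hii hε0.le
    have k4 : (ε * c * c + 2 * (ε * c)) * R = (1 - ε) * R := by rw [hident]
    nlinarith [k1, k2, k3, k4]
  have e1 : r ⬝ᵥ t = QQ + QA := by
    rw [← hrt, dot_sym hPsym, hP, Matrix.add_mulVec, dotProduct_add,
      ← hQQdef, ← hQAdef]
  have e2 : r ⬝ᵥ (P⁻¹ * Q * P⁻¹) *ᵥ r = QQ := by
    have hv : (P⁻¹ * Q * P⁻¹) *ᵥ r = P⁻¹ *ᵥ (Q *ᵥ t) := by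
      rw [htdef, Matrix.mulVec_mulVec, Matrix.mulVec_mulVec]
    rw [hv, ← dot_sym hPisym r (Q *ᵥ t), ← htdef]
    exact hQQdef.symm
  have e3 : r ⬝ᵥ Q⁻¹ *ᵥ r = QQ + 2 * QA + R := by
    have hPQP : P * Q⁻¹ * P = Q + (A + A) + A * Q⁻¹ * A := by
      calc P * Q⁻¹ * P = (Q * Q⁻¹ + A * Q⁻¹) * (Q + A) := by rw [hP, Matrix.add_mul]
        _ = (1 + A * Q⁻¹) * (Q + A) := by rw [hQ1]
        _ = Q + A + (A * Q⁻¹ * Q + A * Q⁻¹ * A) := by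
            rw [Matrix.add_mul, one_mul, Matrix.mul_add]
        _ = Q + (A + A) + A * Q⁻¹ * A := by
            rw [Matrix.mul_assoc A Q⁻¹ Q, hQ1', Matrix.mul_one]; abel
    have hAQA : t ⬝ᵥ (A * Q⁻¹ * A) *ᵥ t = R := by
      have hv : (A * Q⁻¹ * A) *ᵥ t = A *ᵥ y := by
        rw [hydef, hudef, Matrix.mulVec_mulVec, Matrix.mulVec_mulVec]
      rw [hv, ← dot_sym hAsym t y, ← hudef]
      exact hRuy.symm
    rw [← hrt, dot_sym hPsym]
    simp only [Matrix.mulVec_mulVec]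
    rw [← Matrix.mul_assoc, hPQP]
    simp only [Matrix.add_mulVec, dotProduct_add]
    rw [hAQA, ← hQQdef, ← hQAdef]
    ring
  have hDneg : -(1/2) * (r ⬝ᵥ Q⁻¹ *ᵥ r) < 0 := by
    rw [e3]; linarith
  rw [div_le_iff_of_neg hDneg, e1, e2, e3]
  nlinarith [hmain]
end

section
/- Let Q be symmetric positive definite, A diagonal positive definite, P = Q + A, and ε ∈ (0,1]. If λ_min(A⁻¹Q) ≥ (1-√ε)/√ε, then λ_max(P⁻¹A) ≤ √ε. -/
open Matrix BigOperators Finset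

theorem eig_PinvA_le_sqrt_eps {n : ℕ} (Q A P : Matrix (Fin n) (Fin n) ℝ)
    (hQ : Q.PosDef) (hA : A.PosDef) (hAdiag : A.IsDiag) (hP : P = Q + A)
    (ε : ℝ) (hε0 : 0 < ε) (hε1 : ε ≤ 1)
    (heig : ∀ μ : ℝ, (A⁻¹ * Q - μ • 1).det = 0 → (1 - Real.sqrt ε) / Real.sqrt ε ≤ μ) :
    ∀ μ : ℝ, (P⁻¹ * A - μ • 1).det = 0 → μ ≤ Real.sqrt ε := by
  intro μ hdet
  by_contra hcon
  push_neg at hcon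
  have hs : 0 < Real.sqrt ε := Real.sqrt_pos.mpr hε0
  have hμ : 0 < μ := hs.trans hcon
  have hμ' : μ ≠ 0 := hμ.ne'
  have hPd : P.PosDef := by rw [hP]; exact hQ.add_posSemidef hA.posSemidef
  have hPu : IsUnit P.det := isUnit_iff_ne_zero.mpr hPd.det_pos.ne'
  have hAu : IsUnit A.det := isUnit_iff_ne_zero.mpr hA.det_pos.ne'
  have h1 : P⁻¹ * A - μ • 1 = P⁻¹ * (A - μ • P) := by
    rw [Matrix.mul_sub, Matrix.mul_smul, Matrix.nonsing_inv_mul _ hPu]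
  have hPinvdet : (P⁻¹).det ≠ 0 := by
    have h := Matrix.det_mul P⁻¹ P
    rw [Matrix.nonsing_inv_mul _ hPu, Matrix.det_one] at h
    intro h0; rw [h0, zero_mul] at h; exact one_ne_zero h
  have h2 : (A - μ • P).det = 0 := by
    rw [h1, Matrix.det_mul] at hdet
    rcases mul_eq_zero.mp hdet with h | h
    · exact absurd h hPinvdet
    · exact h
  have key : A⁻¹ * Q - ((1 - μ)/μ) • 1 = (-(1/μ)) • (A⁻¹ * (A - μ • P)) := by
    rw [hP, smul_add, Matrix.mul_sub, Matrix.mul_add, Matrix.mul_smul, Matrix.mul_smul,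
        Matrix.nonsing_inv_mul _ hAu]
    match_scalars <;> field_simp
  have hdet2 : (A⁻¹ * Q - ((1 - μ)/μ) • 1).det = 0 := by
    rw [key, Matrix.det_smul, Matrix.det_mul, h2, mul_zero, mul_zero]
  have hle := heig _ hdet2
  rw [div_le_div_iff₀ hs hμ] at hle
  nlinarith [hs, hcon]
end

section
/- Let Q be symmetric positive definite, A diagonal positive definite, P = Q + A. If λ_max(P⁻¹A) ≤ √ε for ε ∈ [0,1], then as symmetric matrices, Q⁻¹ - 2P⁻¹ + P⁻¹QP⁻¹ ⪯ ε Q⁻¹. -/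
open Matrix BigOperators Finset

section Aux

variable {m : Type*} [Fintype m] [DecidableEq m]

/-- If `M` is positive definite and `det (M - μ•1) = 0` then `μ > 0`. -/
lemma aux_pos_of_det_eq_zero {M : Matrix m m ℝ} (hM : M.PosDef) {μ : ℝ}
    (h : (M - μ • 1).det = 0) : 0 < μ := by
  by_contra h'
  push_neg at h'
  have h1 : M - μ • (1 : Matrix m m ℝ) = M + (-μ) • 1 := by module
  have h2 : ((-μ) • (1 : Matrix m m ℝ)).PosSemidef := by
    rw [smul_one_eq_diagonal]
    exact posSemidef_diagonal_iff.mpr fun i => neg_nonneg.mpr h'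
  have h3 : (M - μ • (1 : Matrix m m ℝ)).PosDef := h1 ▸ hM.add_posSemidef h2
  exact h3.det_pos.ne' h

/-- Congruence of a positive definite matrix by an invertible matrix is positive definite. -/
lemma aux_conj_posDef {A B : Matrix m m ℝ} (hA : A.PosDef) (hB : IsUnit B.det) :
    (Bᴴ * A * B).PosDef := by
  refine posDef_iff_dotProduct_mulVec.mpr ⟨isHermitian_conjTranspose_mul_mul B hA.1, fun ⦃x⦄ hx => ?_⟩
  have hinj : Function.Injective B.mulVec :=
    mulVec_injective_iff_isUnit.mpr ((Matrix.isUnit_iff_isUnit_det B).mpr hB)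
  have hBx : B *ᵥ x ≠ 0 := fun hc => hx (hinj (by simpa using hc))
  simpa only [star_mulVec, dotProduct_mulVec, vecMul_vecMul] using hA.dotProduct_mulVec_pos hBx

lemma aux_conj_mul_conj (U : Matrix m m ℝ) (hU : star U * U = 1) (X Y : Matrix m m ℝ) :
    (U * X * star U) * (U * Y * star U) = U * (X * Y) * star U := by
  have h : ∀ Z : Matrix m m ℝ, star U * (U * Z) = Z := fun Z => by
    rw [← mul_assoc, hU, one_mul]
  simp only [mul_assoc, h]

end Aux

theorem loewner_regularization_bound {n : ℕ} (Q A P : Matrix (Fin n) (Fin n) ℝ)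
    (hQ : Q.PosDef) (hA : A.PosDef) (hAdiag : A.IsDiag) (hP : P = Q + A)
    (ε : ℝ) (hε0 : 0 ≤ ε) (hε1 : ε ≤ 1)
    (heig : ∀ μ : ℝ, (P⁻¹ * A - μ • 1).det = 0 → μ ≤ Real.sqrt ε) :
    (ε • Q⁻¹ - (Q⁻¹ - (2 : ℝ) • P⁻¹ + P⁻¹ * Q * P⁻¹)).PosSemidef := by
  classical
  have hPd : P.PosDef := by rw [hP]; exact hQ.add hA
  have hPdetUnit : IsUnit P.det := hPd.det_pos.ne'.isUnit
  have hQdetUnit : IsUnit Q.det := hQ.det_pos.ne'.isUnit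
  have hPinv : P⁻¹.PosDef := hPd.inv
  open scoped MatrixOrder in
  set R := CFC.sqrt P⁻¹ with hRdef
  have hRps : R.PosSemidef := (CFC.sqrt_nonneg P⁻¹).posSemidef
  have hRH : Rᴴ = R := hRps.isHermitian
  have hRR : R * R = P⁻¹ := CFC.sqrt_mul_sqrt_self P⁻¹ hPinv.posSemidef.nonneg
  have hRdet : IsUnit R.det := by
    have hdet : R.det * R.det = P⁻¹.det := by rw [← det_mul, hRR]
    have h2 : P⁻¹.det ≠ 0 := hPinv.det_pos.ne'
    exact isUnit_iff_ne_zero.mpr (fun hc => h2 (by rw [← hdet, hc, zero_mul]))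
  have hRiR : R⁻¹ * R = 1 := Matrix.nonsing_inv_mul R hRdet
  have hRRi : R * R⁻¹ = 1 := Matrix.mul_nonsing_inv R hRdet
  have hRiP : R⁻¹ = R * P := Matrix.inv_eq_right_inv (by
    rw [← mul_assoc, hRR]; exact Matrix.nonsing_inv_mul P hPdetUnit)
  have hRPR : R * P * R = 1 := by
    rw [show R * P = R⁻¹ from hRiP.symm, hRiR]
  set S := R * A * R with hSdef
  have hSpd : S.PosDef := by
    have h := aux_conj_posDef hA hRdet; rwa [hRH] at h
  have hQeq : Q = P - A := by rw [hP]; abel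
  have hAeq : A = P - Q := by rw [hP]; abel
  have hRQR : R * Q * R = 1 - S := by
    rw [hQeq, mul_sub, sub_mul, hRPR, hSdef]
  have h1S : (1 - S).PosDef := by
    have h := aux_conj_posDef hQ hRdet; rwa [hRH, hRQR] at h
  -- spectral decomposition of S
  have hSH : S.IsHermitian := hSpd.isHermitian
  set U : Matrix (Fin n) (Fin n) ℝ := (hSH.eigenvectorUnitary : Matrix (Fin n) (Fin n) ℝ) with hUdef
  set d : Fin n → ℝ := hSH.eigenvalues with hddef
  have hU1 : U * star U = 1 :=
    Matrix.mem_unitaryGroup_iff.mp (Matrix.IsHermitian.eigenvectorUnitary hSH).2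
  have hU2 : star U * U = 1 :=
    Matrix.mem_unitaryGroup_iff'.mp (Matrix.IsHermitian.eigenvectorUnitary hSH).2
  have hspec : S = U * diagonal d * star U := by
    have h := hSH.spectral_theorem
    simpa [RCLike.ofReal_real_eq_id] using h
  -- determinant of S - mu 1
  have hconj_sub : ∀ μ : ℝ, S - μ • 1 = U * (diagonal d - μ • 1) * star U := by
    intro μ
    rw [mul_sub, sub_mul, Matrix.mul_smul, mul_one, Matrix.smul_mul, hU1, hspec]
  have hμdet : ∀ μ : ℝ, (S - μ • 1).det = ∏ i, (d i - μ) := by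
    intro μ
    rw [hconj_sub μ]
    have h : (U * (diagonal d - μ • 1) * star U).det
        = (star U * U).det * (diagonal d - μ • 1).det := by
      rw [det_mul, det_mul, det_mul]; ring
    rw [h, hU2, det_one, one_mul, smul_one_eq_diagonal, diagonal_sub, det_diagonal]
  -- similarity with P⁻¹ * A
  have hsim : ∀ μ : ℝ, (P⁻¹ * A - μ • 1).det = (S - μ • 1).det := by
    intro μ
    have h1 : P⁻¹ * A - μ • 1 = R * (S - μ • 1) * R⁻¹ := by
      rw [mul_sub, sub_mul]
      congr 1
      · rw [hSdef]
        symm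
        calc R * (R * A * R) * R⁻¹ = (R * R) * A * (R * R⁻¹) := by
              simp only [mul_assoc]
          _ = P⁻¹ * A := by rw [hRR, hRRi, mul_one]
      · rw [Matrix.mul_smul, mul_one, Matrix.smul_mul, hRRi]
    rw [h1, det_mul_right_comm, hRRi, one_mul]
  -- eigenvalue bounds
  have hd_pos : ∀ i, 0 < d i := fun i => hSpd.eigenvalues_pos i
  have hd_eig : ∀ i, (S - d i • 1).det = 0 := fun i => by
    rw [hμdet]; exact Finset.prod_eq_zero (mem_univ i) (sub_self _)
  have hd_le : ∀ i, d i ≤ Real.sqrt ε := fun i =>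
    heig _ (by rw [hsim]; exact hd_eig i)
  have hd_lt1 : ∀ i, 0 < 1 - d i := by
    intro i
    apply aux_pos_of_det_eq_zero h1S
    have h : (1 - S) - (1 - d i) • (1 : Matrix (Fin n) (Fin n) ℝ) = -(S - d i • 1) := by
      module
    rw [h, det_neg, hd_eig i, mul_zero]
  have hd_sq : ∀ i, d i ^ 2 ≤ ε := fun i => by
    calc d i ^ 2 ≤ Real.sqrt ε ^ 2 := by
          exact pow_le_pow_left₀ (hd_pos i).le (hd_le i) 2
      _ = ε := Real.sq_sqrt hε0
  -- the inverse of Q via the decomposition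
  set g : Fin n → ℝ := fun i => (1 - d i)⁻¹ with hgdef
  set G := U * diagonal g * star U with hGdef
  have hGinv : (1 - S) * G = 1 := by
    have h1Seq : 1 - S = U * diagonal (fun i => 1 - d i) * star U := by
      have hdd : diagonal (fun i => (1:ℝ) - d i) = diagonal (fun _ => (1:ℝ)) - diagonal d :=
        (diagonal_sub _ _).symm
      rw [hdd, diagonal_one, mul_sub, mul_one, sub_mul, hU1, ← hspec]
    rw [h1Seq, hGdef, aux_conj_mul_conj U hU2, diagonal_mul_diagonal]
    have h : (fun i => (1 - d i) * g i) = fun _ => (1 : ℝ) :=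
      funext fun i => mul_inv_cancel₀ (hd_lt1 i).ne'
    rw [h, diagonal_one, mul_one, hU1]
  have hQeq2 : Q = R⁻¹ * (1 - S) * R⁻¹ := by
    rw [← hRQR]
    calc Q = (R⁻¹ * R) * Q * (R * R⁻¹) := by rw [hRiR, hRRi, one_mul, mul_one]
      _ = R⁻¹ * (R * Q * R) * R⁻¹ := by simp only [mul_assoc]
  have hG : Q⁻¹ = R * G * R := by
    apply Matrix.inv_eq_right_inv
    calc Q * (R * G * R) = (R⁻¹ * (1 - S) * R⁻¹) * (R * G * R) := by rw [← hQeq2]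
      _ = R⁻¹ * ((1 - S) * ((R⁻¹ * R) * (G * R))) := by simp only [mul_assoc]
      _ = R⁻¹ * (((1 - S) * G) * R) := by rw [hRiR, one_mul]; simp only [mul_assoc]
      _ = 1 := by rw [hGinv, one_mul, hRiR]
  -- factorization of the target
  set W := R * U with hWdef
  have hWH : Wᴴ = star U * R := by
    rw [hWdef, conjTranspose_mul, hRH, Matrix.star_eq_conjTranspose]
  have hW : ∀ v : Fin n → ℝ, R * (U * diagonal v * star U) * R = W * diagonal v * Wᴴ := by
    intro v
    rw [hWH, hWdef]
    simp only [mul_assoc]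
  have hSGS : S * G * S = U * diagonal (fun i => d i * g i * d i) * star U := by
    rw [hspec, hGdef, aux_conj_mul_conj U hU2, aux_conj_mul_conj U hU2,
      diagonal_mul_diagonal, diagonal_mul_diagonal]
  have hEps : ε • Q⁻¹ = W * diagonal (fun i => ε * g i) * Wᴴ := by
    rw [hG, ← hW, hGdef]
    have h : diagonal (fun i => ε * g i) = ε • diagonal g := by
      rw [← diagonal_smul]; rfl
    rw [h]
    simp only [Matrix.smul_mul, Matrix.mul_smul]
  have hMid : P⁻¹ * A * Q⁻¹ * A * P⁻¹
      = W * diagonal (fun i => d i * g i * d i) * Wᴴ := by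
    rw [← hW, ← hSGS, hG, ← hRR, hSdef, hGdef]
    simp only [mul_assoc]
  -- the algebraic identity
  have hQQi : Q * Q⁻¹ = 1 := Matrix.mul_nonsing_inv Q hQdetUnit
  have hQiQ : Q⁻¹ * Q = 1 := Matrix.nonsing_inv_mul Q hQdetUnit
  have hPPi : P * P⁻¹ = 1 := Matrix.mul_nonsing_inv P hPdetUnit
  have hPiP : P⁻¹ * P = 1 := Matrix.nonsing_inv_mul P hPdetUnit
  have h1 : Q⁻¹ - P⁻¹ = P⁻¹ * A * Q⁻¹ := by
    calc Q⁻¹ - P⁻¹ = P⁻¹ * (P * Q⁻¹) - P⁻¹ * (Q * Q⁻¹) := by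
          rw [← mul_assoc, hPiP, one_mul, hQQi, mul_one]
      _ = P⁻¹ * ((P - Q) * Q⁻¹) := by rw [sub_mul, mul_sub]
      _ = P⁻¹ * A * Q⁻¹ := by rw [← hAeq, mul_assoc]
  have h2 : Q⁻¹ - P⁻¹ = Q⁻¹ * A * P⁻¹ := by
    calc Q⁻¹ - P⁻¹ = Q⁻¹ * (P * P⁻¹) - Q⁻¹ * (Q * P⁻¹) := by
          rw [hPPi, mul_one, ← mul_assoc, hQiQ, one_mul]
      _ = Q⁻¹ * ((P - Q) * P⁻¹) := by rw [sub_mul, mul_sub]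
      _ = Q⁻¹ * A * P⁻¹ := by rw [← hAeq, mul_assoc]
  have h3 : P⁻¹ * A * P⁻¹ = P⁻¹ - P⁻¹ * Q * P⁻¹ := by
    calc P⁻¹ * A * P⁻¹ = P⁻¹ * ((P - Q) * P⁻¹) := by rw [← hAeq, mul_assoc]
      _ = P⁻¹ * (P * P⁻¹) - P⁻¹ * (Q * P⁻¹) := by rw [sub_mul, mul_sub]
      _ = P⁻¹ - P⁻¹ * Q * P⁻¹ := by rw [hPPi, mul_one, ← mul_assoc]
  have hE : Q⁻¹ - (2 : ℝ) • P⁻¹ + P⁻¹ * Q * P⁻¹ = P⁻¹ * A * Q⁻¹ * A * P⁻¹ := by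
    have hstep : P⁻¹ * A * Q⁻¹ * A * P⁻¹ = (Q⁻¹ - P⁻¹) * A * P⁻¹ := by rw [h1]
    rw [hstep, sub_mul, sub_mul, ← h2, h3]
    module
  -- conclude
  have hf : ∀ i, 0 ≤ ε * g i - d i * g i * d i := by
    intro i
    have hgpos : 0 < g i := inv_pos.mpr (hd_lt1 i)
    have h : ε * g i - d i * g i * d i = (ε - d i ^ 2) * g i := by ring
    rw [h]
    exact mul_nonneg (sub_nonneg.mpr (hd_sq i)) hgpos.le
  have hXfact : ε • Q⁻¹ - (Q⁻¹ - (2 : ℝ) • P⁻¹ + P⁻¹ * Q * P⁻¹)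
      = W * diagonal (fun i => ε * g i - d i * g i * d i) * Wᴴ := by
    rw [hE, hEps, hMid, ← Matrix.sub_mul, ← Matrix.mul_sub, diagonal_sub]
  rw [hXfact]
  exact (posSemidef_diagonal_iff.mpr hf).mul_mul_conjTranspose_same W
end

section
/- Let B be an n×n real matrix, block partitioned according to p = [n_1,...,n_N], that is strictly block diagonally dominant: each diagonal block B[i][i] is invertible and (‖(B[i][i])⁻¹‖_2)⁻¹ > Σ_{j≠i} ‖B[i][j]‖_2 for all i. Define β_p(B) = min_i ( (‖(B[i][i])⁻¹‖_2)⁻¹ - Σ_{j≠i} ‖B[i][j]‖_2 ) > 0. Then B is invertible and ‖B⁻¹‖_{2,p} ≤ 1/β_p(B), where ‖·‖_{2,p} is the operator norm induced by the block-maximum norm ‖x‖_{2,p} = max_i ‖x^{[i]}‖_2. -/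
open Matrix BigOperators Finset

lemma eNorm_eq_norm {k : ℕ} (v : EuclideanSpace ℝ (Fin k)) :
    eNorm (fun a => v a) = ‖v‖ := by
  rw [EuclideanSpace.norm_eq]
  simp [eNorm, Real.norm_eq_abs, sq_abs]

lemma eNorm_nonneg {k : ℕ} (v : Fin k → ℝ) : 0 ≤ eNorm v := Real.sqrt_nonneg _

lemma specNorm_nonneg {m n : Type*} [Fintype m] [Fintype n] [DecidableEq m] [DecidableEq n]
    (A : Matrix m n ℝ) : 0 ≤ specNorm A := norm_nonneg _

lemma eNorm_eq_zero {k : ℕ} {v : Fin k → ℝ} (h : eNorm v = 0) : v = 0 := by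
  have h2 : eNorm (fun a => ((WithLp.equiv 2 (Fin k → ℝ)).symm v) a) = 0 := h
  rw [eNorm_eq_norm] at h2
  have h3 := norm_eq_zero.mp h2
  funext a
  have := congrFun (congrArg (WithLp.equiv 2 (Fin k → ℝ)) h3) a
  simpa using this

lemma eNorm_mulVec_le {k l : ℕ} (A : Matrix (Fin k) (Fin l) ℝ) (v : Fin l → ℝ) :
    eNorm (A.mulVec v) ≤ specNorm A * eNorm v := by
  have h := (LinearMap.toContinuousLinearMap (Matrix.toEuclideanLin A)).le_opNorm
    ((WithLp.equiv 2 (Fin l → ℝ)).symm v)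
  have h1 : eNorm (A.mulVec v) = ‖(WithLp.equiv 2 (Fin k → ℝ)).symm (A.mulVec v)‖ :=
    eNorm_eq_norm ((WithLp.equiv 2 (Fin k → ℝ)).symm (A.mulVec v))
  have h2 : eNorm v = ‖(WithLp.equiv 2 (Fin l → ℝ)).symm v‖ := eNorm_eq_norm _
  rw [h1, h2]; simpa [specNorm] using h

lemma eNorm_sum_le {k : ℕ} {ι : Type*} (s : Finset ι) (f : ι → (Fin k → ℝ)) :
    eNorm (∑ j ∈ s, f j) ≤ ∑ j ∈ s, eNorm (f j) := by
  have h := norm_sum_le (E := EuclideanSpace ℝ (Fin k)) s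
    (fun j => (WithLp.equiv 2 (Fin k → ℝ)).symm (f j))
  have h1 : eNorm (∑ j ∈ s, f j)
      = ‖∑ j ∈ s, (WithLp.equiv 2 (Fin k → ℝ)).symm (f j)‖ := by
    rw [← eNorm_eq_norm]; congr 1; funext a; simp
  rw [h1]
  refine h.trans (le_of_eq ?_)
  exact Finset.sum_congr rfl fun j _ => (eNorm_eq_norm _).symm

lemma eNorm_sub_le {k : ℕ} (u w : Fin k → ℝ) :
    eNorm u - eNorm w ≤ eNorm (u + w) := by
  have h1 : eNorm (u + w) = ‖(WithLp.equiv 2 (Fin k → ℝ)).symm u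
      + (WithLp.equiv 2 (Fin k → ℝ)).symm w‖ := eNorm_eq_norm ((WithLp.equiv 2 (Fin k → ℝ)).symm u
      + (WithLp.equiv 2 (Fin k → ℝ)).symm w)
  have h2 : eNorm u = ‖(WithLp.equiv 2 (Fin k → ℝ)).symm u‖ := eNorm_eq_norm _
  have h3 : eNorm w = ‖(WithLp.equiv 2 (Fin k → ℝ)).symm w‖ := eNorm_eq_norm _
  rw [h1, h2, h3]
  have := norm_le_add_norm_add ((WithLp.equiv 2 (Fin k → ℝ)).symm u)
      ((WithLp.equiv 2 (Fin k → ℝ)).symm w)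
  linarith

lemma mulVec_blk {N : ℕ} {d : Fin N → ℕ}
    (B : Matrix ((i : Fin N) × Fin (d i)) ((i : Fin N) × Fin (d i)) ℝ)
    (x : ((i : Fin N) × Fin (d i)) → ℝ) (i : Fin N) :
    (fun a => B.mulVec x ⟨i, a⟩)
      = ∑ j, (blk B i j).mulVec (fun b => x ⟨j, b⟩) := by
  funext a
  rw [Finset.sum_apply]
  simp only [Matrix.mulVec, dotProduct, blk]
  rw [← Finset.univ_sigma_univ, Finset.sum_sigma]

lemma le_blockVecNorm {N : ℕ} {d : Fin N → ℕ}
    (x : ((i : Fin N) × Fin (d i)) → ℝ) (i : Fin N) :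
    eNorm (fun a => x ⟨i, a⟩) ≤ blockVecNorm x :=
  le_ciSup (f := fun j => eNorm (fun a => x ⟨j, a⟩))
    (Set.Finite.bddAbove (Set.finite_range _)) i

lemma blockVecNorm_nonneg {N : ℕ} (hN : 0 < N) {d : Fin N → ℕ}
    (x : ((i : Fin N) × Fin (d i)) → ℝ) : 0 ≤ blockVecNorm x :=
  (eNorm_nonneg _).trans (le_blockVecNorm x ⟨0, hN⟩)

lemma key_lower {N : ℕ} (hN : 0 < N) {d : Fin N → ℕ}
    (B : Matrix ((i : Fin N) × Fin (d i)) ((i : Fin N) × Fin (d i)) ℝ)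
    (hinv : ∀ i, IsUnit (blk B i i))
    (hdom : ∀ i, ∑ j ∈ Finset.univ.erase i, specNorm (blk B i j)
        < (specNorm ((blk B i i)⁻¹))⁻¹)
    (x : ((i : Fin N) × Fin (d i)) → ℝ) :
    (⨅ i, ((specNorm ((blk B i i)⁻¹))⁻¹
        - ∑ j ∈ Finset.univ.erase i, specNorm (blk B i j))) * blockVecNorm x
      ≤ blockVecNorm (B.mulVec x) := by
  haveI : Nonempty (Fin N) := ⟨⟨0, hN⟩⟩
  obtain ⟨i, hmax⟩ := Finite.exists_max (fun j => eNorm (fun b => x ⟨j, b⟩))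
  have hi : blockVecNorm x = eNorm (fun b => x ⟨i, b⟩) :=
    le_antisymm (ciSup_le hmax) (le_blockVecNorm x i)
  set β := ⨅ i, ((specNorm ((blk B i i)⁻¹))⁻¹
      - ∑ j ∈ Finset.univ.erase i, specNorm (blk B i j)) with hβ
  set S := ∑ j ∈ Finset.univ.erase i, specNorm (blk B i j) with hS
  have hβi : β ≤ (specNorm ((blk B i i)⁻¹))⁻¹ - S :=
    ciInf_le (Set.Finite.bddBelow (Set.finite_range _)) i
  set f : Fin N → (Fin (d i) → ℝ) := fun j => (blk B i j).mulVec (fun b => x ⟨j, b⟩) with hf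
  have hdec : (fun a => B.mulVec x ⟨i, a⟩) = f i + ∑ j ∈ Finset.univ.erase i, f j := by
    rw [mulVec_blk, ← Finset.add_sum_erase Finset.univ f (Finset.mem_univ i)]
  have h1 : eNorm (f i) - eNorm (∑ j ∈ Finset.univ.erase i, f j)
      ≤ eNorm (fun a => B.mulVec x ⟨i, a⟩) := by
    rw [hdec]; exact eNorm_sub_le _ _
  have h2 : eNorm (∑ j ∈ Finset.univ.erase i, f j) ≤ S * blockVecNorm x := by
    refine (eNorm_sum_le _ _).trans ?_
    rw [hS, Finset.sum_mul]
    refine Finset.sum_le_sum fun j _ => ?_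
    exact (eNorm_mulVec_le _ _).trans
      (mul_le_mul_of_nonneg_left (le_blockVecNorm x j) (specNorm_nonneg _))
  have hpos : 0 < (specNorm ((blk B i i)⁻¹))⁻¹ :=
    lt_of_le_of_lt (Finset.sum_nonneg fun j _ => specNorm_nonneg _) (hdom i)
  have hnormpos : 0 < specNorm ((blk B i i)⁻¹) := inv_pos.mp hpos
  have h3 : (specNorm ((blk B i i)⁻¹))⁻¹ * eNorm (fun b => x ⟨i, b⟩) ≤ eNorm (f i) := by
    have hx : eNorm (fun b => x ⟨i, b⟩) ≤ specNorm ((blk B i i)⁻¹) * eNorm (f i) := by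
      have hxi : (fun b => x ⟨i, b⟩) = ((blk B i i)⁻¹).mulVec (f i) := by
        rw [hf]
        rw [Matrix.mulVec_mulVec, Matrix.nonsing_inv_mul _
          ((Matrix.isUnit_iff_isUnit_det _).mp (hinv i)), Matrix.one_mulVec]
      conv_lhs => rw [hxi]
      exact eNorm_mulVec_le _ _
    rw [inv_mul_le_iff₀ hnormpos]
    exact hx
  have hBx : eNorm (fun a => B.mulVec x ⟨i, a⟩) ≤ blockVecNorm (B.mulVec x) :=
    le_blockVecNorm _ i
  have hxnn : 0 ≤ blockVecNorm x := blockVecNorm_nonneg hN x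
  have hmul : β * blockVecNorm x
      ≤ ((specNorm ((blk B i i)⁻¹))⁻¹ - S) * blockVecNorm x :=
    mul_le_mul_of_nonneg_right hβi hxnn
  have hsub : ((specNorm ((blk B i i)⁻¹))⁻¹ - S) * blockVecNorm x
      = (specNorm ((blk B i i)⁻¹))⁻¹ * blockVecNorm x - S * blockVecNorm x := by ring
  rw [← hi] at h3
  linarith

theorem inv_blockOpNorm_bound {N : ℕ} (hN : 0 < N) {d : Fin N → ℕ}
    (B : Matrix ((i : Fin N) × Fin (d i)) ((i : Fin N) × Fin (d i)) ℝ)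
    (hinv : ∀ i, IsUnit (blk B i i))
    (hdom : ∀ i, ∑ j ∈ Finset.univ.erase i, specNorm (blk B i j)
        < (specNorm ((blk B i i)⁻¹))⁻¹) :
    IsUnit B ∧ blockOpNorm B⁻¹
      ≤ (⨅ i, ((specNorm ((blk B i i)⁻¹))⁻¹
          - ∑ j ∈ Finset.univ.erase i, specNorm (blk B i j)))⁻¹ := by
  haveI : Nonempty (Fin N) := ⟨⟨0, hN⟩⟩
  set β := ⨅ i, ((specNorm ((blk B i i)⁻¹))⁻¹
      - ∑ j ∈ Finset.univ.erase i, specNorm (blk B i j)) with hβ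
  have hβpos : 0 < β := by
    obtain ⟨i0, hmin⟩ := Finite.exists_min (fun i => (specNorm ((blk B i i)⁻¹))⁻¹
      - ∑ j ∈ Finset.univ.erase i, specNorm (blk B i j))
    have hle : (specNorm ((blk B i0 i0)⁻¹))⁻¹
        - ∑ j ∈ Finset.univ.erase i0, specNorm (blk B i0 j) ≤ β := le_ciInf hmin
    have := sub_pos.mpr (hdom i0)
    linarith
  have hunit : IsUnit B := by
    rw [Matrix.isUnit_iff_isUnit_det, isUnit_iff_ne_zero]
    intro hdet
    obtain ⟨v, hv0, hvz⟩ := (Matrix.exists_mulVec_eq_zero_iff).mpr hdet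
    have hk := key_lower hN B hinv hdom v
    rw [hvz] at hk
    have hz : blockVecNorm (0 : ((i : Fin N) × Fin (d i)) → ℝ) = 0 := by
      have : ∀ i : Fin N, eNorm (fun a => (0 : ((i : Fin N) × Fin (d i)) → ℝ) ⟨i, a⟩) = 0 := by
        intro i; simp [eNorm]
      simp only [blockVecNorm, this, ciSup_const]
    rw [hz] at hk
    have hbvnn := blockVecNorm_nonneg hN v
    have hbv : blockVecNorm v = 0 := by nlinarith
    apply hv0
    funext s
    obtain ⟨j, b⟩ := s
    have h1 := le_blockVecNorm v j
    rw [hbv] at h1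
    have h2 : eNorm (fun a => v ⟨j, a⟩) = 0 := le_antisymm h1 (eNorm_nonneg _)
    exact congrFun (eNorm_eq_zero h2) b
  refine ⟨hunit, ?_⟩
  apply csInf_le
  · exact ⟨0, fun c hc => hc.1⟩
  · refine ⟨inv_nonneg.mpr hβpos.le, fun y => ?_⟩
    have hk := key_lower hN B hinv hdom (B⁻¹.mulVec y)
    have hBy : B.mulVec (B⁻¹.mulVec y) = y := by
      rw [Matrix.mulVec_mulVec, Matrix.mul_nonsing_inv _
        ((Matrix.isUnit_iff_isUnit_det _).mp hunit), Matrix.one_mulVec]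
    rw [hBy] at hk
    calc blockVecNorm (B⁻¹.mulVec y) = β⁻¹ * (β * blockVecNorm (B⁻¹.mulVec y)) := by
          rw [inv_mul_cancel_left₀ hβpos.ne']
      _ ≤ β⁻¹ * blockVecNorm y := mul_le_mul_of_nonneg_left hk (inv_nonneg.mpr hβpos.le)
end

section
/- Let Q = Qᵀ ≻ 0 be block partitioned with symmetric positive definite diagonal blocks, let α_i ≥ 0, and set γ_i(α) = 2/(λ_max(Q[i][i]) + λ_min(Q[i][i]) + 2α_i). Then the regularized per-block contraction factor q_{α_i} = ‖I - γ_i(α)(Q[i][i] + α_i I)‖_2 + γ_i(α) Σ_{j≠i}‖Q[i][j]‖_2 equals (2Σ_{j≠i}‖Q[i][j]‖_2 + λ_max(Q[i][i]) - λ_min(Q[i][i])) / (λ_max(Q[i][i]) + λ_min(Q[i][i]) + 2α_i), and hence for any α_i > 0, q_{α_i} < q_i where q_i is the value at α_i = 0. -/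
open Matrix BigOperators Finset

open scoped Matrix.Norms.L2Operator

section Helpers

variable {n : Type*} [Fintype n] [DecidableEq n]

lemma specNorm_eq_norm (A : Matrix n n ℝ) : specNorm A = ‖A‖ := rfl

lemma specNorm_empty {m : Type*} [Fintype m] [DecidableEq m] [IsEmpty m]
    (A : Matrix m n ℝ) : specNorm A = 0 := by
  have : A = 0 := Subsingleton.elim _ _
  rw [this]
  simp [specNorm]

lemma eigSet_eq {A : Matrix n n ℝ} (hA : A.IsHermitian) :
    {μ : ℝ | (A - μ • 1).det = 0} = Set.range hA.eigenvalues := by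
  rw [← hA.spectrum_real_eq_range_eigenvalues]
  ext μ
  rw [Set.mem_setOf_eq, spectrum.mem_iff, Algebra.algebraMap_eq_smul_one,
    Matrix.isUnit_iff_isUnit_det, isUnit_iff_ne_zero, not_ne_iff]
  have : μ • (1 : Matrix n n ℝ) - A = -(A - μ • 1) := by abel
  rw [this, Matrix.det_neg]
  constructor
  · intro h
    rw [h, mul_zero]
  · intro h
    rcases mul_eq_zero.mp h with h | h
    · exact absurd h (pow_ne_zero _ (by norm_num))
    · exact h

lemma euc_apply (M : Matrix n n ℝ) (x : EuclideanSpace ℝ n) (j : n) :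
    (LinearMap.toContinuousLinearMap (Matrix.toEuclideanLin M) x) j = (M *ᵥ x) j := rfl

lemma diag_norm_le (v : n → ℝ) {c : ℝ} (hc : 0 ≤ c) (h : ∀ j, |v j| ≤ c) :
    ‖diagonal v‖ ≤ c := by
  rw [Matrix.l2_opNorm_def]
  apply ContinuousLinearMap.opNorm_le_bound _ hc
  intro x
  rw [EuclideanSpace.norm_eq, EuclideanSpace.norm_eq]
  have hrw : ∀ j, ‖(LinearMap.toContinuousLinearMap (Matrix.toEuclideanLin (diagonal v)) x) j‖
      = |v j * x j| := by
    intro j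
    rw [euc_apply, Matrix.mulVec_diagonal]
    simp [Real.norm_eq_abs, abs_mul]
  have key : c * Real.sqrt (∑ i, ‖x i‖ ^ 2)
      = Real.sqrt (∑ i, c ^ 2 * ‖x i‖ ^ 2) := by
    rw [← Finset.mul_sum, Real.sqrt_mul (by positivity), Real.sqrt_sq hc]
  calc Real.sqrt (∑ i, ‖(LinearMap.toContinuousLinearMap (Matrix.toEuclideanLin (diagonal v)) x) i‖ ^ 2)
      ≤ Real.sqrt (∑ i, c ^ 2 * ‖x i‖ ^ 2) := by
        apply Real.sqrt_le_sqrt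
        apply Finset.sum_le_sum
        intro i _
        rw [hrw i, abs_mul]
        have := h i
        have : |v i| ^ 2 ≤ c ^ 2 := by nlinarith [abs_nonneg (v i)]
        rw [mul_pow]
        have hx2 : |x i| ^ 2 = ‖x i‖ ^ 2 := by rw [Real.norm_eq_abs]
        nlinarith [sq_nonneg (x i), abs_nonneg (x i), sq_abs (x i)]
    _ = c * Real.sqrt (∑ i, ‖x i‖ ^ 2) := key.symm

lemma diag_norm_ge (v : n → ℝ) (j : n) : |v j| ≤ ‖diagonal v‖ := by
  have h := Matrix.l2_opNorm_mulVec (diagonal v) (EuclideanSpace.single j 1)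
  rw [EuclideanSpace.norm_single] at h
  have hv : (EuclideanSpace.equiv n ℝ).symm ((diagonal v) *ᵥ (EuclideanSpace.single j 1))
      = EuclideanSpace.single j (v j) := by
    apply PiLp.ext
    intro i
    rcases eq_or_ne i j with rfl | hij
    · simp [Matrix.mulVec_diagonal]
    · simp [Matrix.mulVec_diagonal, hij]
  rw [hv, EuclideanSpace.norm_single] at h
  simpa using h

lemma norm_hermitian [Nonempty n] {A : Matrix n n ℝ} (hA : A.IsHermitian) {c : ℝ}
    (h1 : ∀ j, |hA.eigenvalues j| ≤ c) (h2 : ∃ j, |hA.eigenvalues j| = c) :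
    ‖A‖ = c := by
  haveI : Nontrivial (Matrix n n ℝ) := by
    refine ⟨0, 1, fun h => ?_⟩
    have := congrFun (congrFun h (Classical.arbitrary n)) (Classical.arbitrary n)
    simp [Matrix.one_apply] at this
  have hd : ‖A‖ = ‖diagonal (RCLike.ofReal ∘ hA.eigenvalues : n → ℝ)‖ := by
    conv_lhs => rw [hA.spectral_theorem]
    rw [Unitary.conjStarAlgAut_apply, ← Unitary.coe_star, CStarRing.norm_mul_coe_unitary,
      CStarRing.norm_coe_unitary_mul]
  rw [hd]
  have hco : (RCLike.ofReal ∘ hA.eigenvalues : n → ℝ) = hA.eigenvalues := by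
    funext j; simp
  rw [hco]
  have hc0 : 0 ≤ c := by obtain ⟨j, hj⟩ := h2; rw [← hj]; exact abs_nonneg _
  refine le_antisymm (diag_norm_le _ hc0 h1) ?_
  obtain ⟨j, hj⟩ := h2
  rw [← hj]
  exact diag_norm_ge _ j

lemma eigSet_affine (A : Matrix n n ℝ) {r : ℝ} (t : ℝ) (hr : r ≠ 0) :
    {μ : ℝ | ((t • 1 + r • A : Matrix n n ℝ) - μ • 1).det = 0}
      = (fun x => t + r * x) '' {μ : ℝ | (A - μ • 1).det = 0} := by
  ext ν
  have hmat : (t • 1 + r • A : Matrix n n ℝ) - ν • 1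
      = r • (A - ((ν - t) / r) • (1 : Matrix n n ℝ)) := by
    rw [smul_sub, smul_smul, mul_div_cancel₀ _ hr]
    module
  simp only [Set.mem_setOf_eq, Set.mem_image, hmat, Matrix.det_smul]
  constructor
  · intro h
    rcases mul_eq_zero.mp h with h | h
    · exact absurd h (pow_ne_zero _ hr)
    · exact ⟨(ν - t) / r, h, by field_simp; ring⟩
  · rintro ⟨μ, hμ, rfl⟩
    have : (t + r * μ - t) / r = μ := by field_simp; ring
    rw [this, hμ, mul_zero]

lemma minEig_spec [Nonempty n] {A : Matrix n n ℝ} (hA : A.IsHermitian) :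
    (∃ j, hA.eigenvalues j = minEig A) ∧ ∀ j, minEig A ≤ hA.eigenvalues j := by
  have hset := eigSet_eq hA
  have hfin : ({μ : ℝ | (A - μ • 1).det = 0}).Finite := by
    rw [hset]; exact Set.finite_range _
  have hne : ({μ : ℝ | (A - μ • 1).det = 0}).Nonempty := by
    rw [hset]; exact Set.range_nonempty _
  constructor
  · have h1 : minEig A ∈ {μ : ℝ | (A - μ • 1).det = 0} := hne.csInf_mem hfin
    rw [hset] at h1
    obtain ⟨j, hj⟩ := h1
    exact ⟨j, hj⟩
  · intro j
    apply csInf_le hfin.bddBelow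
    rw [hset]; exact ⟨j, rfl⟩

lemma maxEig_spec [Nonempty n] {A : Matrix n n ℝ} (hA : A.IsHermitian) :
    (∃ j, hA.eigenvalues j = maxEig A) ∧ ∀ j, hA.eigenvalues j ≤ maxEig A := by
  have hset := eigSet_eq hA
  have hfin : ({μ : ℝ | (A - μ • 1).det = 0}).Finite := by
    rw [hset]; exact Set.finite_range _
  have hne : ({μ : ℝ | (A - μ • 1).det = 0}).Nonempty := by
    rw [hset]; exact Set.range_nonempty _
  constructor
  · have h1 : maxEig A ∈ {μ : ℝ | (A - μ • 1).det = 0} := hne.csSup_mem hfin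
    rw [hset] at h1
    obtain ⟨j, hj⟩ := h1
    exact ⟨j, hj⟩
  · intro j
    apply le_csSup hfin.bddAbove
    rw [hset]; exact ⟨j, rfl⟩

end Helpers

theorem regularized_contraction_factor {N : ℕ} {d : Fin N → ℕ}
    (Q : Matrix ((i : Fin N) × Fin (d i)) ((i : Fin N) × Fin (d i)) ℝ)
    (hQ : Q.IsSymm) (hblk : ∀ i, (blk Q i i).PosDef)
    (α : Fin N → ℝ) (hα : ∀ i, 0 ≤ α i)
    (γ : Fin N → ℝ)
    (hγ : ∀ i, γ i = 2 / (maxEig (blk Q i i) + minEig (blk Q i i) + 2 * α i))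
    (i : Fin N)
    (hpos : 0 < 2 * (∑ j ∈ Finset.univ.erase i, specNorm (blk Q i j))
        + maxEig (blk Q i i) - minEig (blk Q i i)) :
    specNorm ((1 : Matrix (Fin (d i)) (Fin (d i)) ℝ)
          - γ i • (blk Q i i + α i • (1 : Matrix (Fin (d i)) (Fin (d i)) ℝ)))
        + γ i * ∑ j ∈ Finset.univ.erase i, specNorm (blk Q i j)
      = (2 * (∑ j ∈ Finset.univ.erase i, specNorm (blk Q i j))
            + maxEig (blk Q i i) - minEig (blk Q i i))
          / (maxEig (blk Q i i) + minEig (blk Q i i) + 2 * α i)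
    ∧ (0 < α i →
        (2 * (∑ j ∈ Finset.univ.erase i, specNorm (blk Q i j))
            + maxEig (blk Q i i) - minEig (blk Q i i))
          / (maxEig (blk Q i i) + minEig (blk Q i i) + 2 * α i)
        < (2 * (∑ j ∈ Finset.univ.erase i, specNorm (blk Q i j))
            + maxEig (blk Q i i) - minEig (blk Q i i))
          / (maxEig (blk Q i i) + minEig (blk Q i i))) := by
  classical
  rcases Nat.eq_zero_or_pos (d i) with hd0 | hdpos
  · exfalso
    haveI : IsEmpty (Fin (d i)) := by rw [hd0]; infer_instance
    have hSe : ∑ j ∈ Finset.univ.erase i, specNorm (blk Q i j) = 0 :=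
      Finset.sum_eq_zero fun j _ => specNorm_empty _
    have hmin : minEig (blk Q i i) = 0 := by
      have hs : {μ : ℝ | (blk Q i i - μ • 1).det = 0} = ∅ := by
        ext μ; simp [Matrix.det_isEmpty]
      rw [minEig, hs, Real.sInf_empty]
    have hmax : maxEig (blk Q i i) = 0 := by
      have hs : {μ : ℝ | (blk Q i i - μ • 1).det = 0} = ∅ := by
        ext μ; simp [Matrix.det_isEmpty]
      rw [maxEig, hs, Real.sSup_empty]
    rw [hSe, hmin, hmax] at hpos; linarith
  haveI : Nonempty (Fin (d i)) := ⟨⟨0, hdpos⟩⟩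
  set A := blk Q i i with hAdef
  set S := ∑ j ∈ Finset.univ.erase i, specNorm (blk Q i j) with hSdef
  have hA : A.IsHermitian := (hblk i).1
  obtain ⟨⟨jmin, hjmin⟩, hminle⟩ := minEig_spec hA
  obtain ⟨⟨jmax, hjmax⟩, hmaxle⟩ := maxEig_spec hA
  set lmin := minEig A with hlmindef
  set lmax := maxEig A with hlmaxdef
  have hlmin : 0 < lmin := by rw [← hjmin]; exact (hblk i).eigenvalues_pos jmin
  have hminmax : lmin ≤ lmax := by rw [← hjmin]; exact hmaxle jmin
  set D := lmax + lmin + 2 * α i with hDdef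
  have hD : 0 < D := by have := hα i; simp only [hDdef]; linarith
  have hγi : γ i = 2 / D := hγ i
  have hγpos : 0 < γ i := by rw [hγi]; positivity
  set B := (1 : Matrix (Fin (d i)) (Fin (d i)) ℝ) - γ i • (A + α i • 1) with hBdef
  have hBeq : B = (1 - γ i * α i) • (1 : Matrix (Fin (d i)) (Fin (d i)) ℝ) + (-γ i) • A := by
    rw [hBdef]; module
  have hAt : Aᵀ = A := by
    have h := hA.eq
    rwa [Matrix.conjTranspose_eq_transpose_of_trivial] at h
  have hBh : B.IsHermitian := by
    simp [Matrix.IsHermitian, hBdef, conjTranspose_sub, conjTranspose_smul,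
      conjTranspose_add, conjTranspose_one, hAt, hA.eq]
  have hsetB : Set.range hBh.eigenvalues
      = (fun x => (1 - γ i * α i) + (-γ i) * x) '' Set.range hA.eigenvalues := by
    rw [← eigSet_eq hBh, ← eigSet_eq hA, hBeq]
    exact eigSet_affine A _ (by linarith)
  set M := (lmax - lmin) / D with hMdef
  have hM0 : 0 ≤ M := div_nonneg (by linarith) hD.le
  have hval : ∀ μ : ℝ, (1 - γ i * α i) + (-γ i) * μ = (lmax + lmin - 2 * μ) / D := by
    intro μ; rw [hγi]; field_simp; ring
  have key : ∀ μ : ℝ, lmin ≤ μ → μ ≤ lmax →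
      |(1 - γ i * α i) + (-γ i) * μ| ≤ M := by
    intro μ hμ1 hμ2
    rw [hval μ, hMdef, abs_div, abs_of_pos hD]
    have habs : |lmax + lmin - 2 * μ| ≤ lmax - lmin :=
      abs_le.mpr ⟨by linarith, by linarith⟩
    exact div_le_div_of_nonneg_right habs hD.le
  have h1 : ∀ j, |hBh.eigenvalues j| ≤ M := by
    intro j
    have hmem : hBh.eigenvalues j ∈ Set.range hBh.eigenvalues := Set.mem_range_self j
    rw [hsetB] at hmem
    obtain ⟨x, hxmem, hx⟩ := hmem
    obtain ⟨j0, rfl⟩ := hxmem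
    rw [← hx]
    exact key _ (hminle j0) (hmaxle j0)
  have h2 : ∃ j, |hBh.eigenvalues j| = M := by
    have hmem : (1 - γ i * α i) + (-γ i) * lmin ∈ Set.range hBh.eigenvalues := by
      rw [hsetB]; exact ⟨lmin, ⟨jmin, hjmin⟩, rfl⟩
    obtain ⟨j, hj⟩ := hmem
    refine ⟨j, ?_⟩
    rw [hj, hval lmin, hMdef]
    rw [abs_div, abs_of_pos hD, abs_of_nonneg (by linarith : (0:ℝ) ≤ lmax + lmin - 2 * lmin)]
    ring_nf
  have hnorm : specNorm B = M := by
    rw [specNorm_eq_norm]; exact norm_hermitian hBh h1 h2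
  constructor
  · rw [hnorm, hγi, hMdef]
    field_simp
    ring
  · intro hαpos
    have hb : 0 < lmax + lmin := by linarith
    have hbc : lmax + lmin < D := by rw [hDdef]; linarith
    exact div_lt_div_of_pos_left hpos hb hbc
end

section
/- Let Q = Qᵀ ≻ 0 block partitioned with strictly block diagonally dominant structure and define q_i = (2Σ_{j≠i}‖Q[i][j]‖_2 + λ_max(Q[i][i]) - λ_min(Q[i][i]))/(λ_max(Q[i][i]) + λ_min(Q[i][i])). Given q* ∈ (0,1), if each agent chooses α_i = max{ (q_i/q* - 1)·(λ_max(Q[i][i]) + λ_min(Q[i][i]))/2, 0 } and γ_i = 2/(λ_max(Q[i][i]) + λ_min(Q[i][i]) + 2α_i), then q_A := max_i [ (2Σ_{j≠i}‖Q[i][j]‖_2 + λ_max(Q[i][i]) - λ_min(Q[i][i]))/(λ_max(Q[i][i]) + λ_min(Q[i][i]) + 2α_i) ] ≤ q*. -/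
open Matrix BigOperators Finset

open Polynomial in
lemma eigSet_eq_s16 {k : ℕ} (A : Matrix (Fin k) (Fin k) ℝ) :
    {μ : ℝ | (A - μ • 1).det = 0} = {μ : ℝ | (Matrix.charpoly A).IsRoot μ} := by
  ext μ
  have h1 : (Matrix.charpoly A).eval μ = (μ • (1 : Matrix (Fin k) (Fin k) ℝ) - A).det := by
    rw [Matrix.charpoly, ← coe_evalRingHom, RingHom.map_det]
    congr 1
    ext i j
    by_cases h : i = j <;>
      simp [Matrix.charmatrix_apply, Matrix.one_apply, Matrix.smul_apply, h]
  have h2 : A - μ • 1 = -(μ • 1 - A) := by rw [neg_sub]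
  simp only [Set.mem_setOf_eq, IsRoot, h1, h2, Matrix.det_neg]
  constructor
  · intro h
    rcases mul_eq_zero.mp h with h' | h'
    · exact absurd h' (by positivity)
    · exact h'
  · intro h; rw [h, mul_zero]

lemma minEig_le_maxEig {k : ℕ} (hk : 0 < k) (A : Matrix (Fin k) (Fin k) ℝ)
    (hA : A.IsHermitian) : minEig A ≤ maxEig A := by
  have hfin : {μ : ℝ | (A - μ • 1).det = 0}.Finite := by
    rw [eigSet_eq_s16]
    exact Polynomial.finite_setOf_isRoot (Matrix.charpoly_monic A).ne_zero
  set i0 : Fin k := ⟨0, hk⟩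
  set μ0 := hA.eigenvalues i0
  have hmem : μ0 ∈ {μ : ℝ | (A - μ • 1).det = 0} := by
    simp only [Set.mem_setOf_eq]
    rw [← Matrix.exists_mulVec_eq_zero_iff]
    refine ⟨hA.eigenvectorBasis i0, fun h => hA.eigenvectorBasis.orthonormal.ne_zero i0 (by simpa using congrArg (WithLp.toLp 2) h), ?_⟩
    have hv := hA.mulVec_eigenvectorBasis i0
    rw [Matrix.sub_mulVec, Matrix.smul_mulVec, Matrix.one_mulVec]
    erw [hv]
    exact sub_eq_zero_of_eq rfl
  calc minEig A ≤ μ0 := csInf_le hfin.bddBelow hmem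
    _ ≤ maxEig A := le_csSup hfin.bddAbove hmem

lemma minEig_empty {k : ℕ} (hk : k = 0) (A : Matrix (Fin k) (Fin k) ℝ) : minEig A = 0 := by
  subst hk
  have h : {μ : ℝ | (A - μ • 1).det = 0} = ∅ := by
    ext μ; simp [Matrix.det_fin_zero]
  rw [minEig, h, Real.sInf_empty]

theorem convergence_rate_regularization {N : ℕ} {d : Fin N → ℕ}
    (Q : Matrix ((i : Fin N) × Fin (d i)) ((i : Fin N) × Fin (d i)) ℝ)
    (hQ : Q.IsSymm) (hblk : ∀ i, (blk Q i i).PosDef)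
    (hdd : ∀ i, ∑ j ∈ Finset.univ.erase i, specNorm (blk Q i j) < minEig (blk Q i i))
    (qstar : ℝ) (hqs : qstar ∈ Set.Ioo (0 : ℝ) 1)
    (qi α γ : Fin N → ℝ)
    (hqi : ∀ i, qi i = (2 * (∑ j ∈ Finset.univ.erase i, specNorm (blk Q i j))
          + maxEig (blk Q i i) - minEig (blk Q i i))
        / (maxEig (blk Q i i) + minEig (blk Q i i)))
    (hα : ∀ i, α i = max ((qi i / qstar - 1)
        * ((maxEig (blk Q i i) + minEig (blk Q i i)) / 2)) 0)
    (hγ : ∀ i, γ i = 2 / (maxEig (blk Q i i) + minEig (blk Q i i) + 2 * α i)) :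
    ∀ i, (2 * (∑ j ∈ Finset.univ.erase i, specNorm (blk Q i j))
          + maxEig (blk Q i i) - minEig (blk Q i i))
        / (maxEig (blk Q i i) + minEig (blk Q i i) + 2 * α i) ≤ qstar := by
  intro i
  have hdd' := hdd i
  have hq' := hqi i
  have hαi := hα i
  set S := ∑ j ∈ Finset.univ.erase i, specNorm (blk Q i j) with hSdef
  set m := minEig (blk Q i i) with hmdef
  set M := maxEig (blk Q i i) with hMdef
  have hS : 0 ≤ S := Finset.sum_nonneg fun j _ => norm_nonneg _
  have hm : 0 < m := lt_of_le_of_lt hS hdd'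
  have hk : 0 < d i := by
    rcases Nat.eq_zero_or_pos (d i) with h | h
    · exact absurd (minEig_empty h (blk Q i i)) (by rw [← hmdef]; exact ne_of_gt hm)
    · exact h
  have hMm : m ≤ M := minEig_le_maxEig hk _ (hblk i).1
  have hs : 0 < M + m := by linarith
  obtain ⟨hq0, hq1⟩ := hqs
  have hnum : 2 * S + M - m = qi i * (M + m) := by
    rw [hq', div_mul_cancel₀ _ (ne_of_gt hs)]
  by_cases hcase : qstar ≤ qi i
  · have h1 : 1 ≤ qi i / qstar := (one_le_div hq0).mpr hcase
    have hα' : α i = (qi i / qstar - 1) * ((M + m) / 2) := by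
      rw [hαi]; exact max_eq_left (by nlinarith)
    have hqpos : 0 < qi i := lt_of_lt_of_le hq0 hcase
    have hden : M + m + 2 * α i = (M + m) * (qi i / qstar) := by
      rw [hα']; field_simp; ring
    rw [hnum, hden]
    have : qi i * (M + m) / ((M + m) * (qi i / qstar)) = qstar := by
      field_simp
    rw [this]
  · push_neg at hcase
    have h1 : qi i / qstar < 1 := (div_lt_one hq0).mpr hcase
    have hα0 : α i = 0 := by
      rw [hαi]; exact max_eq_right (by nlinarith)
    rw [hα0]
    rw [div_le_iff₀ (by linarith)]
    nlinarith
end
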